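/- Let h ∈ ℝ[x,y,z] be irreducible with h(O) = 0, and assume h divides each of f_{x,y}, f_{x,z}, f_{y,z} (so that the surface V(h) is contained in the discriminant variety of q). Fix A, B, C > 0 and define: X_ℝ = {v ∈ ℝ³ : h(v) = 0}; S_ℝ = {v ∈ X_ℝ : ∂h/∂x(v) = ∂h/∂y(v) = ∂h/∂z(v) = 0} (the real singular locus); 𝔛_ℝ = {v ∈ X_ℝ : e(v) = 0}, where e ∈ ℝ[x,y,z] is the determinant of the 3×3 matrix of polynomials with rows (Ax, By, Cz), (∂h/∂x, ∂h/∂y, ∂h/∂z), and (g·∂f/∂x − f·∂g/∂x, g·∂f/∂y − f·∂g/∂y, g·∂f/∂z − f·∂g/∂z); and 𝔷_ℝ = {v = (v₁,v₂,v₃) ∈ X_ℝ : all 2×2 minors of the 2×3 matrix with rows (A·v₁, B·v₂, C·v₃) and ∇h(v) vanish}. Then q tends to L at O along X_ℝ if and only if q tends to L at O along each of S_ℝ, 𝔛_ℝ, and 𝔷_ℝ. -/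

import Mathlib

open MvPolynomial Filter Topology

/-- The quotient `q(v) = f(v)/g(v)`, with the convention `q(v) = 0` when `g(v) = 0`. -/
noncomputable def quotFun (f g : MvPolynomial (Fin 3) ℝ) (v : EuclideanSpace ℝ (Fin 3)) : ℝ :=
  eval v f / eval v g

/-- The polynomial `f_{xᵢ,xⱼ} = xᵢ(g ∂f/∂xⱼ − f ∂g/∂xⱼ) − xⱼ(g ∂f/∂xᵢ − f ∂g/∂xᵢ)`. -/
noncomputable def minorPoly (f g : MvPolynomial (Fin 3) ℝ) (i j : Fin 3) :
    MvPolynomial (Fin 3) ℝ :=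
  X i * (g * pderiv j f - f * pderiv j g) - X j * (g * pderiv i f - f * pderiv i g)

/-- `q` tends to `L` at the origin along the set `S`. -/
def TendsAlong (f g : MvPolynomial (Fin 3) ℝ) (S : Set (EuclideanSpace ℝ (Fin 3))) (L : ℝ) :
    Prop :=
  Tendsto (quotFun f g) (𝓝[S \ {0}] 0) (𝓝 L)

/-- The real surface `X_ℝ = {h = 0}`. -/
def surf (h : MvPolynomial (Fin 3) ℝ) : Set (EuclideanSpace ℝ (Fin 3)) :=
  {v | eval v h = 0}

/-- The real singular locus `S_ℝ` of the surface `{h = 0}`. -/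
def singLocus (h : MvPolynomial (Fin 3) ℝ) : Set (EuclideanSpace ℝ (Fin 3)) :=
  {v ∈ surf h | eval v (pderiv 0 h) = 0 ∧ eval v (pderiv 1 h) = 0 ∧ eval v (pderiv 2 h) = 0}

/-- The determinant polynomial `e` with rows `(Ax, By, Cz)`, `∇h` and `g∇f − f∇g`. -/
noncomputable def ePoly (A B C : ℝ) (f g h : MvPolynomial (Fin 3) ℝ) :
    MvPolynomial (Fin 3) ℝ :=
  Matrix.det (Matrix.of
    ![![MvPolynomial.C A * X 0, MvPolynomial.C B * X 1, MvPolynomial.C C * X 2],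
      ![pderiv 0 h, pderiv 1 h, pderiv 2 h],
      ![g * pderiv 0 f - f * pderiv 0 g, g * pderiv 1 f - f * pderiv 1 g,
        g * pderiv 2 f - f * pderiv 2 g]])

/-- The locus `𝔛_ℝ = {v ∈ X_ℝ : e(v) = 0}` of regular critical points. -/
noncomputable def fracX (A B C : ℝ) (f g h : MvPolynomial (Fin 3) ℝ) :
    Set (EuclideanSpace ℝ (Fin 3)) :=
  {v ∈ surf h | eval v (ePoly A B C f g h) = 0}

/-- The nontransversality locus `𝔷_ℝ`: points of `X_ℝ` where all `2 × 2` minors of the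
matrix with rows `(Av₁, Bv₂, Cv₃)` and `∇h(v)` vanish. -/
def fracZ (A B C : ℝ) (h : MvPolynomial (Fin 3) ℝ) : Set (EuclideanSpace ℝ (Fin 3)) :=
  {v ∈ surf h |
    A * v 0 * eval v (pderiv 1 h) - B * v 1 * eval v (pderiv 0 h) = 0 ∧
    A * v 0 * eval v (pderiv 2 h) - C * v 2 * eval v (pderiv 0 h) = 0 ∧
    B * v 1 * eval v (pderiv 2 h) - C * v 2 * eval v (pderiv 1 h) = 0}

/-! ### Auxiliary differential calculus for polynomial evaluation -/

/-- The gradient of (evaluation of) a polynomial, as a continuous linear map. -/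
noncomputable def pgrad (P : MvPolynomial (Fin 3) ℝ) (v : EuclideanSpace ℝ (Fin 3)) :
    EuclideanSpace ℝ (Fin 3) →L[ℝ] ℝ :=
  ∑ i : Fin 3, eval v (pderiv i P) • (EuclideanSpace.proj i : EuclideanSpace ℝ (Fin 3) →L[ℝ] ℝ)

lemma pgrad_apply (P : MvPolynomial (Fin 3) ℝ) (v w : EuclideanSpace ℝ (Fin 3)) :
    pgrad P v w = ∑ i : Fin 3, eval v (pderiv i P) * w i := by
  simp [pgrad, ContinuousLinearMap.sum_apply]

lemma hasStrictFDerivAt_peval (P : MvPolynomial (Fin 3) ℝ) (v : EuclideanSpace ℝ (Fin 3)) :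
    HasStrictFDerivAt (fun u : EuclideanSpace ℝ (Fin 3) => eval u P) (pgrad P v) v := by
  induction P using MvPolynomial.induction_on with
  | C a =>
      have h1 : (fun u : EuclideanSpace ℝ (Fin 3) =>
          eval u (MvPolynomial.C a : MvPolynomial (Fin 3) ℝ)) = fun _ => a := by
        funext u; simp
      have h2 : pgrad (MvPolynomial.C a) v = 0 := by
        ext w; simp [pgrad_apply, pderiv_C]
      rw [h1, h2]; exact hasStrictFDerivAt_const a v
  | add p q hp hq =>
      have h1 : (fun u : EuclideanSpace ℝ (Fin 3) => eval u (p + q)) =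
          fun u : EuclideanSpace ℝ (Fin 3) => eval u p + eval u q := by funext u; simp
      have h2 : pgrad (p + q) v = pgrad p v + pgrad q v := by
        ext w; simp [pgrad_apply, Finset.sum_add_distrib, add_mul]
      rw [h1, h2]; exact hp.add hq
  | mul_X p i hp =>
      have h1 : (fun u : EuclideanSpace ℝ (Fin 3) => eval u (p * X i)) =
          fun u : EuclideanSpace ℝ (Fin 3) => eval u p * u i := by funext u; simp
      have hxi : HasStrictFDerivAt (fun u : EuclideanSpace ℝ (Fin 3) => u i)
          (EuclideanSpace.proj i : EuclideanSpace ℝ (Fin 3) →L[ℝ] ℝ) v :=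
        (EuclideanSpace.proj i : EuclideanSpace ℝ (Fin 3) →L[ℝ] ℝ).hasStrictFDerivAt
      have h2 : pgrad (p * X i) v =
          eval v p • (EuclideanSpace.proj i : EuclideanSpace ℝ (Fin 3) →L[ℝ] ℝ)
            + v i • pgrad p v := by
        ext w
        simp only [pgrad_apply, ContinuousLinearMap.add_apply, ContinuousLinearMap.smul_apply,
          PiLp.proj_apply, smul_eq_mul, Fin.sum_univ_three, pderiv_mul, pderiv_X,
          map_add, map_mul, eval_X]
        fin_cases i <;> simp <;> ring
      rw [h1, h2]; exact hp.mul hxi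

lemma continuousAt_peval (P : MvPolynomial (Fin 3) ℝ) (v : EuclideanSpace ℝ (Fin 3)) :
    ContinuousAt (fun u : EuclideanSpace ℝ (Fin 3) => eval u P) v :=
  (hasStrictFDerivAt_peval P v).hasFDerivAt.continuousAt

lemma pgrad_single (P : MvPolynomial (Fin 3) ℝ) (v : EuclideanSpace ℝ (Fin 3)) (i : Fin 3) :
    pgrad P v (EuclideanSpace.single i (1:ℝ)) = eval v (pderiv i P) := by
  rw [pgrad_apply]
  fin_cases i <;> simp [Fin.sum_univ_three, EuclideanSpace.single_apply]

lemma hasStrictFDerivAt_quotFun (f g : MvPolynomial (Fin 3) ℝ) (v : EuclideanSpace ℝ (Fin 3))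
    (hgv : eval v g ≠ 0) :
    HasStrictFDerivAt (quotFun f g)
      (eval v f • ((-(eval v g ^ 2)⁻¹) • pgrad g v) + (eval v g)⁻¹ • pgrad f v) v := by
  have hinv : HasStrictFDerivAt (fun u : EuclideanSpace ℝ (Fin 3) => (eval u g)⁻¹)
      ((-(eval v g ^ 2)⁻¹) • pgrad g v) v :=
    (hasStrictDerivAt_inv hgv).comp_hasStrictFDerivAt v (hasStrictFDerivAt_peval g v)
  have hmul := (hasStrictFDerivAt_peval f v).mul hinv
  have hfun : quotFun f g = fun u : EuclideanSpace ℝ (Fin 3) => eval u f * (eval u g)⁻¹ := by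
    funext u; simp [quotFun, div_eq_mul_inv]
  rw [hfun]
  exact hmul

/-! ### The ellipsoid polynomial -/

noncomputable def nPoly (A B C : ℝ) : MvPolynomial (Fin 3) ℝ :=
  MvPolynomial.C A * X 0 * X 0 + MvPolynomial.C B * X 1 * X 1 + MvPolynomial.C C * X 2 * X 2

lemma eval_nPoly (A B C : ℝ) (v : EuclideanSpace ℝ (Fin 3)) :
    eval v (nPoly A B C) = A * v 0 * v 0 + B * v 1 * v 1 + C * v 2 * v 2 := by
  simp [nPoly]

lemma eval_pderiv_nPoly (A B C : ℝ) (v : EuclideanSpace ℝ (Fin 3)) (i : Fin 3) :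
    eval v (pderiv i (nPoly A B C)) = 2 * (![A, B, C] i) * v i := by
  fin_cases i <;> simp [nPoly, pderiv_mul, pderiv_X, pderiv_C] <;> ring

lemma eval_ePoly (A B C : ℝ) (f g h : MvPolynomial (Fin 3) ℝ) (v : EuclideanSpace ℝ (Fin 3)) :
    eval v (ePoly A B C f g h) =
      (A * v 0) * (eval v (pderiv 1 h) * (eval v g * eval v (pderiv 2 f) - eval v f * eval v (pderiv 2 g))
        - eval v (pderiv 2 h) * (eval v g * eval v (pderiv 1 f) - eval v f * eval v (pderiv 1 g)))
      - (B * v 1) * (eval v (pderiv 0 h) * (eval v g * eval v (pderiv 2 f) - eval v f * eval v (pderiv 2 g))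
        - eval v (pderiv 2 h) * (eval v g * eval v (pderiv 0 f) - eval v f * eval v (pderiv 0 g)))
      + (C * v 2) * (eval v (pderiv 0 h) * (eval v g * eval v (pderiv 1 f) - eval v f * eval v (pderiv 1 g))
        - eval v (pderiv 1 h) * (eval v g * eval v (pderiv 0 f) - eval v f * eval v (pderiv 0 g))) := by
  rw [ePoly, Matrix.det_fin_three]
  simp only [Matrix.of_apply, Matrix.cons_val', Matrix.cons_val_zero, Matrix.cons_val_one,
    Matrix.head_cons, Matrix.empty_val', Matrix.cons_val_fin_one, Matrix.head_fin_const,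
    Matrix.cons_val_two, Matrix.tail_cons, map_add, map_sub, map_mul, eval_C, eval_X]
  ring

lemma euclidean_norm_sq (u : EuclideanSpace ℝ (Fin 3)) :
    ‖u‖ ^ 2 = u 0 ^ 2 + u 1 ^ 2 + u 2 ^ 2 := by
  rw [EuclideanSpace.norm_eq, Real.sq_sqrt (by positivity)]
  simp [Fin.sum_univ_three, Real.norm_eq_abs, sq_abs]

/-! ### Main theorem -/

set_option maxHeartbeats 1000000 in
/-- Reduction of the limit along a two-dimensional component `{h = 0}` of the discriminant
variety to limits along the curves `S_ℝ`, `𝔛_ℝ` and `𝔷_ℝ`. -/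
theorem limit_along_surface_iff_limit_along_curves (f g : MvPolynomial (Fin 3) ℝ)
    (hg : ∃ ε > 0, ∀ v ∈ Metric.ball (0 : EuclideanSpace ℝ (Fin 3)) ε, eval v g = 0 → v = 0)
    (h : MvPolynomial (Fin 3) ℝ) (hirr : Irreducible h) (h0 : eval (0 : Fin 3 → ℝ) h = 0)
    (hdvd01 : h ∣ minorPoly f g 0 1) (hdvd02 : h ∣ minorPoly f g 0 2)
    (hdvd12 : h ∣ minorPoly f g 1 2)
    (A B C : ℝ) (hA : 0 < A) (hB : 0 < B) (hC : 0 < C) (L : ℝ) :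
    TendsAlong f g (surf h) L ↔
      TendsAlong f g (singLocus h) L ∧ TendsAlong f g (fracX A B C f g h) L ∧
        TendsAlong f g (fracZ A B C h) L := by
  classical
  constructor
  · intro hXlim
    have mono : ∀ S : Set (EuclideanSpace ℝ (Fin 3)), S ⊆ surf h → TendsAlong f g S L := by
      intro S hs
      exact hXlim.mono_left (nhdsWithin_mono _ (Set.diff_subset_diff_left hs))
    exact ⟨mono _ fun v hv => hv.1, mono _ fun v hv => hv.1, mono _ fun v hv => hv.1⟩
  · rintro ⟨hSlim, hXlim, hZlim⟩
    obtain ⟨ε₀, hε₀, hgball⟩ := hg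
    rw [TendsAlong, Metric.tendsto_nhdsWithin_nhds] at hSlim hXlim hZlim ⊢
    intro ε hε
    obtain ⟨δ₁, hδ₁, H₁⟩ := hSlim ε hε
    obtain ⟨δ₂, hδ₂, H₂⟩ := hXlim ε hε
    obtain ⟨δ₃, hδ₃, H₃⟩ := hZlim ε hε
    set m : ℝ := min A (min B C) with hm_def
    set M : ℝ := max A (max B C) with hM_def
    have hm : 0 < m := lt_min hA (lt_min hB hC)
    have hM : 0 < M := lt_of_lt_of_le hA (le_max_left _ _)
    have hmA : m ≤ A := min_le_left _ _
    have hmB : m ≤ B := le_trans (min_le_right _ _) (min_le_left _ _)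
    have hmC : m ≤ C := le_trans (min_le_right _ _) (min_le_right _ _)
    have hAM : A ≤ M := le_max_left _ _
    have hBM : B ≤ M := le_trans (le_max_left _ _) (le_max_right _ _)
    have hCM : C ≤ M := le_trans (le_max_right _ _) (le_max_right _ _)
    set δ' : ℝ := min (min δ₁ δ₂) (min δ₃ ε₀) with hδ'_def
    have hδ' : 0 < δ' := lt_min (lt_min hδ₁ hδ₂) (lt_min hδ₃ hε₀)
    have hδ'1 : δ' ≤ δ₁ := le_trans (min_le_left _ _) (min_le_left _ _)
    have hδ'2 : δ' ≤ δ₂ := le_trans (min_le_left _ _) (min_le_right _ _)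
    have hδ'3 : δ' ≤ δ₃ := le_trans (min_le_right _ _) (min_le_left _ _)
    have hδ'ε₀ : δ' ≤ ε₀ := le_trans (min_le_right _ _) (min_le_right _ _)
    refine ⟨Real.sqrt (m / M) * δ', by positivity, ?_⟩
    intro v hv hvd
    have hvh : eval v h = 0 := hv.1
    have hvne : v ≠ 0 := fun hh => hv.2 (by simp [hh])
    have hn_lb : ∀ u : EuclideanSpace ℝ (Fin 3), m * ‖u‖ ^ 2 ≤ eval u (nPoly A B C) := by
      intro u
      rw [eval_nPoly, euclidean_norm_sq]
      nlinarith [sq_nonneg (u 0), sq_nonneg (u 1), sq_nonneg (u 2),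
        mul_le_mul_of_nonneg_right hmA (sq_nonneg (u 0)),
        mul_le_mul_of_nonneg_right hmB (sq_nonneg (u 1)),
        mul_le_mul_of_nonneg_right hmC (sq_nonneg (u 2))]
    have hn_ub : ∀ u : EuclideanSpace ℝ (Fin 3), eval u (nPoly A B C) ≤ M * ‖u‖ ^ 2 := by
      intro u
      rw [eval_nPoly, euclidean_norm_sq]
      nlinarith [sq_nonneg (u 0), sq_nonneg (u 1), sq_nonneg (u 2),
        mul_le_mul_of_nonneg_right hAM (sq_nonneg (u 0)),
        mul_le_mul_of_nonneg_right hBM (sq_nonneg (u 1)),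
        mul_le_mul_of_nonneg_right hCM (sq_nonneg (u 2))]
    set c : ℝ := eval v (nPoly A B C) with hc_def
    have hvnorm : 0 < ‖v‖ := norm_pos_iff.mpr hvne
    have hc_pos : 0 < c := lt_of_lt_of_le (by positivity) (hn_lb v)
    set K : Set (EuclideanSpace ℝ (Fin 3)) :=
      {u | eval u h = 0 ∧ eval u (nPoly A B C) = c} with hK_def
    have hvK : v ∈ K := ⟨hvh, rfl⟩
    have hvd' : ‖v‖ < Real.sqrt (m / M) * δ' := by rwa [dist_zero_right] at hvd
    have hKnorm : ∀ u ∈ K, ‖u‖ < δ' := by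
      intro u hu
      have h1 : m * ‖u‖ ^ 2 ≤ c := hu.2 ▸ hn_lb u
      have h2 : c ≤ M * ‖v‖ ^ 2 := hn_ub v
      have hsq : (Real.sqrt (m / M) * δ') ^ 2 = m / M * δ' ^ 2 := by
        rw [mul_pow, Real.sq_sqrt (by positivity)]
      have h4 : ‖v‖ ^ 2 < m / M * δ' ^ 2 := by nlinarith [norm_nonneg v]
      have h5 : M * (m / M * δ' ^ 2) = m * δ' ^ 2 := by field_simp
      have h6 : ‖u‖ ^ 2 < δ' ^ 2 := by nlinarith
      nlinarith [norm_nonneg u]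
    have hKne : ∀ u ∈ K, u ≠ 0 ∧ eval u g ≠ 0 := by
      intro u hu
      have hune : u ≠ 0 := by
        intro h0'
        have hz : eval u (nPoly A B C) = 0 := by
          rw [h0']
          rw [eval_nPoly]
          norm_num
        rw [hu.2] at hz
        linarith
      refine ⟨hune, fun hgz => hune (hgball u ?_ hgz)⟩
      have := hKnorm u hu
      exact Metric.mem_ball.mpr (by rw [dist_zero_right]; linarith)
    have cont_h : Continuous fun u : EuclideanSpace ℝ (Fin 3) => eval u h :=
      continuous_iff_continuousAt.mpr fun u => continuousAt_peval h u
    have cont_n : Continuous fun u : EuclideanSpace ℝ (Fin 3) => eval u (nPoly A B C) :=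
      continuous_iff_continuousAt.mpr fun u => continuousAt_peval (nPoly A B C) u
    have hKclosed : IsClosed K := by
      have : K = {u : EuclideanSpace ℝ (Fin 3) | eval u h = 0} ∩ {u : EuclideanSpace ℝ (Fin 3) | eval u (nPoly A B C) = c} := rfl
      rw [this]
      exact (isClosed_eq cont_h continuous_const).inter (isClosed_eq cont_n continuous_const)
    have hKcomp : IsCompact K := by
      refine (isCompact_closedBall (0 : EuclideanSpace ℝ (Fin 3)) δ').of_isClosed_subset
        hKclosed ?_
      intro u hu
      exact Metric.mem_closedBall.mpr (by rw [dist_zero_right]; exact le_of_lt (hKnorm u hu))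
    have hcont : ContinuousOn (quotFun f g) K := by
      intro u hu
      have hgne := (hKne u hu).2
      have : ContinuousAt (quotFun f g) u :=
        ContinuousAt.div (continuousAt_peval f u) (continuousAt_peval g u) hgne
      exact this.continuousWithinAt
    obtain ⟨pmax, hpmaxK, hmax⟩ := hKcomp.exists_isMaxOn ⟨v, hvK⟩ hcont
    obtain ⟨pmin, hpminK, hmin⟩ := hKcomp.exists_isMinOn ⟨v, hvK⟩ hcont
    have key : ∀ p ∈ K, IsLocalExtrOn (quotFun f g) K p → dist (quotFun f g p) L < ε := by
      intro p hpK hextr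
      obtain ⟨hpne, hgp⟩ := hKne p hpK
      have hpnorm : ‖p‖ < δ' := hKnorm p hpK
      have hpd : dist p 0 < δ' := by rw [dist_zero_right]; exact hpnorm
      have hpns : p ∉ ({0} : Set (EuclideanSpace ℝ (Fin 3))) := by simp [hpne]
      set fam : Fin 2 → EuclideanSpace ℝ (Fin 3) → ℝ :=
        ![fun u => eval u h, fun u => eval u (nPoly A B C)] with hfam_def
      set fam' : Fin 2 → (EuclideanSpace ℝ (Fin 3) →L[ℝ] ℝ) :=
        ![pgrad h p, pgrad (nPoly A B C) p] with hfam'_def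
      have hKset : {x : EuclideanSpace ℝ (Fin 3) | ∀ i : Fin 2, fam i x = fam i p} = K := by
        ext u
        simp only [Set.mem_setOf_eq, Fin.forall_fin_two, hfam_def, Matrix.cons_val_zero,
          Matrix.cons_val_one, Matrix.head_cons]
        constructor
        · rintro ⟨h1, h2⟩; exact ⟨h1.trans hpK.1, h2.trans hpK.2⟩
        · rintro ⟨h1, h2⟩; exact ⟨h1.trans hpK.1.symm, h2.trans hpK.2.symm⟩
      have hextr' : IsLocalExtrOn (quotFun f g)
          {x : EuclideanSpace ℝ (Fin 3) | ∀ i : Fin 2, fam i x = fam i p} p := by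
        rw [hKset]; exact hextr
      have hfam' : ∀ i, HasStrictFDerivAt (fam i) (fam' i) p := by
        intro i
        fin_cases i
        · exact hasStrictFDerivAt_peval h p
        · exact hasStrictFDerivAt_peval (nPoly A B C) p
      obtain ⟨Λ, Λ₀, hΛne, hsum⟩ :=
        hextr'.exists_multipliers_of_hasStrictFDerivAt hfam'
          (hasStrictFDerivAt_quotFun f g p hgp)
      have comp : ∀ i : Fin 3,
          Λ 0 * eval p (pderiv i h) + Λ 1 * (2 * (![A, B, C] i) * p i)
            + Λ₀ * (eval p f * (-(eval p g ^ 2)⁻¹ * eval p (pderiv i g))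
              + (eval p g)⁻¹ * eval p (pderiv i f)) = 0 := by
        intro i
        have h2 := DFunLike.congr_fun hsum (EuclideanSpace.single i (1 : ℝ))
        simp only [ContinuousLinearMap.add_apply, ContinuousLinearMap.coe_sum',
          Finset.sum_apply, ContinuousLinearMap.smul_apply, smul_eq_mul,
          ContinuousLinearMap.zero_apply, Fin.sum_univ_two, hfam'_def, Matrix.cons_val_zero,
          Matrix.cons_val_one, Matrix.head_cons, pgrad_single, eval_pderiv_nPoly] at h2
        linear_combination h2
      by_cases hΛ₀ : Λ₀ = 0
      · have compz : ∀ i : Fin 3,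
            Λ 0 * eval p (pderiv i h) + Λ 1 * (2 * (![A, B, C] i) * p i) = 0 := by
          intro i
          have := comp i
          rw [hΛ₀] at this
          linarith [this]
        have cz0 : Λ 0 * eval p (pderiv 0 h) + Λ 1 * (2 * A * p 0) = 0 := by
          have := compz 0; simpa using this
        have cz1 : Λ 0 * eval p (pderiv 1 h) + Λ 1 * (2 * B * p 1) = 0 := by
          have := compz 1; simpa using this
        have cz2 : Λ 0 * eval p (pderiv 2 h) + Λ 1 * (2 * C * p 2) = 0 := by
          have := compz 2; simpa using this
        by_cases hΛ1 : Λ 1 = 0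
        · have hΛ0ne : Λ 0 ≠ 0 := by
            intro h0'
            apply hΛne
            have hΛz : Λ = 0 := by funext j; fin_cases j <;> assumption
            simp [hΛz, hΛ₀]
          have hsing : ∀ i : Fin 3, eval p (pderiv i h) = 0 := by
            intro i
            have := compz i
            rw [hΛ1] at this
            have h3 : Λ 0 * eval p (pderiv i h) = 0 := by linarith
            exact (mul_eq_zero.mp h3).resolve_left hΛ0ne
          refine lt_of_lt_of_le (H₁ ?_ (lt_of_lt_of_le hpd hδ'1)) (le_refl ε)
          exact ⟨⟨hpK.1, hsing 0, hsing 1, hsing 2⟩, hpns⟩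
        · have h2Λ1 : (2 * Λ 1) ≠ 0 := by
            simp [hΛ1]
          have min1 : A * p 0 * eval p (pderiv 1 h) - B * p 1 * eval p (pderiv 0 h) = 0 := by
            have hz : (2 * Λ 1) * (A * p 0 * eval p (pderiv 1 h)
                - B * p 1 * eval p (pderiv 0 h)) = 0 := by
              linear_combination eval p (pderiv 1 h) * cz0 - eval p (pderiv 0 h) * cz1
            exact (mul_eq_zero.mp hz).resolve_left h2Λ1
          have min2 : A * p 0 * eval p (pderiv 2 h) - C * p 2 * eval p (pderiv 0 h) = 0 := by
            have hz : (2 * Λ 1) * (A * p 0 * eval p (pderiv 2 h)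
                - C * p 2 * eval p (pderiv 0 h)) = 0 := by
              linear_combination eval p (pderiv 2 h) * cz0 - eval p (pderiv 0 h) * cz2
            exact (mul_eq_zero.mp hz).resolve_left h2Λ1
          have min3 : B * p 1 * eval p (pderiv 2 h) - C * p 2 * eval p (pderiv 1 h) = 0 := by
            have hz : (2 * Λ 1) * (B * p 1 * eval p (pderiv 2 h)
                - C * p 2 * eval p (pderiv 1 h)) = 0 := by
              linear_combination eval p (pderiv 2 h) * cz1 - eval p (pderiv 1 h) * cz2
            exact (mul_eq_zero.mp hz).resolve_left h2Λ1
          refine lt_of_lt_of_le (H₃ ?_ (lt_of_lt_of_le hpd hδ'3)) (le_refl ε)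
          exact ⟨⟨hpK.1, min1, min2, min3⟩, hpns⟩
      · -- Λ₀ ≠ 0 : fracX
        have hG1 : eval p g * (eval p g)⁻¹ = 1 := mul_inv_cancel₀ hgp
        have hG2 : eval p g ^ 2 * (eval p g ^ 2)⁻¹ = 1 := mul_inv_cancel₀ (pow_ne_zero 2 hgp)
        have comp2 : ∀ i : Fin 3,
            (Λ 0 * eval p g ^ 2) * eval p (pderiv i h)
              + (Λ 1 * eval p g ^ 2) * (2 * (![A, B, C] i) * p i)
              + Λ₀ * (eval p g * eval p (pderiv i f) - eval p f * eval p (pderiv i g)) = 0 := by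
          intro i
          linear_combination (eval p g ^ 2) * comp i
            - (Λ₀ * eval p (pderiv i f) * eval p g) * hG1
            + (Λ₀ * eval p f * eval p (pderiv i g)) * hG2
        have c20 : (Λ 0 * eval p g ^ 2) * eval p (pderiv 0 h)
              + (Λ 1 * eval p g ^ 2) * (2 * A * p 0)
              + Λ₀ * (eval p g * eval p (pderiv 0 f) - eval p f * eval p (pderiv 0 g)) = 0 := by
          have := comp2 0; simpa using this
        have c21 : (Λ 0 * eval p g ^ 2) * eval p (pderiv 1 h)
              + (Λ 1 * eval p g ^ 2) * (2 * B * p 1)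
              + Λ₀ * (eval p g * eval p (pderiv 1 f) - eval p f * eval p (pderiv 1 g)) = 0 := by
          have := comp2 1; simpa using this
        have c22 : (Λ 0 * eval p g ^ 2) * eval p (pderiv 2 h)
              + (Λ 1 * eval p g ^ 2) * (2 * C * p 2)
              + Λ₀ * (eval p g * eval p (pderiv 2 f) - eval p f * eval p (pderiv 2 g)) = 0 := by
          have := comp2 2; simpa using this
        have hdet : Λ₀ * eval p (ePoly A B C f g h) = 0 := by
          rw [eval_ePoly]
          linear_combination
            (B * p 1 * eval p (pderiv 2 h) - C * p 2 * eval p (pderiv 1 h)) * c20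
            + (C * p 2 * eval p (pderiv 0 h) - A * p 0 * eval p (pderiv 2 h)) * c21
            + (A * p 0 * eval p (pderiv 1 h) - B * p 1 * eval p (pderiv 0 h)) * c22
        have hE : eval p (ePoly A B C f g h) = 0 := (mul_eq_zero.mp hdet).resolve_left hΛ₀
        refine lt_of_lt_of_le (H₂ ?_ (lt_of_lt_of_le hpd hδ'2)) (le_refl ε)
        exact ⟨⟨hpK.1, hE⟩, hpns⟩
    have hdmax := key pmax hpmaxK (Or.inr hmax.localize)
    have hdmin := key pmin hpminK (Or.inl hmin.localize)
    have hqmax : quotFun f g v ≤ quotFun f g pmax := hmax hvK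
    have hqmin : quotFun f g pmin ≤ quotFun f g v := hmin hvK
    rw [Real.dist_eq] at hdmax hdmin ⊢
    rw [abs_lt] at hdmax hdmin ⊢
    exact ⟨by linarith [hdmin.1, hqmin], by linarith [hdmax.2, hqmax]⟩
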